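/- For any nonzero admissible integer n, ∫_{[0,1)} 1/(n+x) dμ(x) = Σ_{m admissible, ld_{l(n)}(m) = n} 1/m, where the sum runs over all admissible integers m whose l(n) leading base-b digits form the integer n (here ld_l(m), for m with at least l digits, denotes the integer in [b^{l−1}, b^l) sharing with m its l leading base-b digits). -/

import Mathlib

open MeasureTheory

def Admissible (b : ℕ) (A : Finset ℕ) (n : ℕ) : Prop :=
  (∀ d ∈ Nat.digits b n, d ∈ A) ∧ (n = 0 → 0 ∈ A)

instance (b : ℕ) (A : Finset ℕ) (n : ℕ) : Decidable (Admissible b A n) := by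
  unfold Admissible
  infer_instance

noncomputable def kempnerMeasure (b : ℕ) (A : Finset ℕ) : Measure ℝ :=
  if 0 ∈ A then
    Measure.sum fun l : ℕ =>
      ((b : ENNReal) ^ l)⁻¹ •
        Measure.sum fun n : {n : ℕ // Admissible b A n} =>
          Measure.dirac (((n : ℕ) : ℝ) / (b : ℝ) ^ l)
  else
    Measure.dirac 0 +
      Measure.sum fun l : ℕ =>
        ((b : ENNReal) ^ l)⁻¹ •
          Measure.sum
            (fun n : {n : ℕ // Admissible b A n ∧ l ≤ (Nat.digits b n).length} =>
              Measure.dirac (((n : ℕ) : ℝ) / (b : ℝ) ^ l))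

noncomputable def moment (b : ℕ) (A : Finset ℕ) (m : ℕ) : ℝ :=
  ∫ x in Set.Ico (0 : ℝ) 1, x ^ m ∂(kempnerMeasure b A)

noncomputable def kempnerSum (b : ℕ) (A : Finset ℕ) : ℝ :=
  ∑' n : {n : ℕ // 0 < n ∧ Admissible b A n}, (1 : ℝ) / ((n : ℕ) : ℝ)

open scoped ENNReal

/-! ### Auxiliary digit lemmas -/

lemma digits_decomp {b : ℕ} (hb : 1 < b) {n : ℕ} (hn : n ≠ 0) :
    ∀ l k, k < b ^ l →
      Nat.digits b (n * b ^ l + k) =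
        (Nat.digits b k ++ List.replicate (l - (Nat.digits b k).length) 0) ++ Nat.digits b n := by
  intro l
  induction l with
  | zero =>
      intro k hk
      simp only [pow_zero, Nat.lt_one_iff] at hk
      subst hk
      simp
  | succ l ih =>
      intro k hk
      have hb0 : 0 < b := by omega
      have hm : 0 < n * b ^ (l + 1) + k := by
        have : 0 < n * b ^ (l + 1) := Nat.mul_pos (Nat.pos_of_ne_zero hn) (Nat.pow_pos hb0)
        omega
      have hrw : n * b ^ (l + 1) + k = b * (n * b ^ l) + k := by ring
      have h1 : (n * b ^ (l + 1) + k) % b = k % b := by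
        rw [hrw, Nat.mul_add_mod]
      have h2 : (n * b ^ (l + 1) + k) / b = n * b ^ l + k / b := by
        rw [hrw, Nat.mul_add_div hb0]
      have hk' : k / b < b ^ l := by
        apply Nat.div_lt_of_lt_mul
        rw [pow_succ, mul_comm] at hk
        exact hk
      rw [Nat.digits_def' hb hm, h1, h2, ih (k / b) hk']
      by_cases hk0 : k = 0
      · subst hk0
        simp [List.replicate_succ]
      · rw [Nat.digits_def' hb (Nat.pos_of_ne_zero hk0)]
        simp [Nat.succ_sub_succ]

lemma digits_len_le_iff {b : ℕ} (hb : 1 < b) {k l : ℕ} :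
    (Nat.digits b k).length ≤ l ↔ k < b ^ l := by
  constructor
  · intro h
    exact lt_of_lt_of_le (Nat.lt_base_pow_length_digits hb)
      (Nat.pow_le_pow_right (by omega) h)
  · intro h
    rcases Nat.eq_zero_or_pos k with rfl | hk0
    · simp
    · rw [Nat.digits_len b k hb (by omega)]
      have := (Nat.log_lt_iff_lt_pow hb (by omega : k ≠ 0)).mpr h
      omega

lemma len_decomp {b : ℕ} (hb : 1 < b) {n : ℕ} (hn : n ≠ 0) {l k : ℕ} (hk : k < b ^ l) :
    (Nat.digits b (n * b ^ l + k)).length = l + (Nat.digits b n).length := by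
  rw [digits_decomp hb hn l k hk]
  have hlen : (Nat.digits b k).length ≤ l := (digits_len_le_iff hb).mpr hk
  simp [List.length_append]
  omega

lemma div_decomp {b : ℕ} (hb : 1 < b) {n l k : ℕ} (hk : k < b ^ l) :
    (n * b ^ l + k) / b ^ l = n := by
  rw [mul_comm, Nat.mul_add_div (Nat.pow_pos (by omega)), Nat.div_eq_of_lt hk]
  omega

lemma adm_decomp {b : ℕ} (hb : 1 < b) {A : Finset ℕ} {n : ℕ} (hadm : Admissible b A n)
    (hn : 0 < n) {l k : ℕ} (hk : k < b ^ l) :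
    Admissible b A (n * b ^ l + k) ↔
      (∀ d ∈ Nat.digits b k, d ∈ A) ∧ ((Nat.digits b k).length < l → 0 ∈ A) := by
  have hm : n * b ^ l + k ≠ 0 := by
    have : 0 < n * b ^ l := Nat.mul_pos hn (Nat.pow_pos (by omega))
    omega
  constructor
  · rintro ⟨h, -⟩
    rw [digits_decomp hb (by omega) l k hk] at h
    constructor
    · intro d hd
      exact h d (by simp [hd])
    · intro hlt
      refine h 0 ?_
      simp [List.mem_replicate]
      omega
  · rintro ⟨h1, h2⟩
    refine ⟨?_, by omega⟩
    rw [digits_decomp hb (by omega) l k hk]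
    intro d hd
    rw [List.mem_append, List.mem_append] at hd
    rcases hd with (hd | hd) | hd
    · exact h1 d hd
    · rw [List.mem_replicate] at hd
      rcases hd with ⟨hne, rfl⟩
      exact h2 (by omega)
    · exact hadm.1 d hd

/-! ### The leading-digits condition -/

def KLCond (b : ℕ) (A : Finset ℕ) (n m : ℕ) : Prop :=
  Admissible b A m ∧ (Nat.digits b n).length ≤ (Nat.digits b m).length ∧
    m / b ^ ((Nat.digits b m).length - (Nat.digits b n).length) = n

instance (b : ℕ) (A : Finset ℕ) (n m : ℕ) : Decidable (KLCond b A n m) := by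
  unfold KLCond; infer_instance

lemma cond_decomp {b n m : ℕ} (hb : 1 < b)
    (h2 : m / b ^ ((Nat.digits b m).length - (Nat.digits b n).length) = n) :
    m = n * b ^ ((Nat.digits b m).length - (Nat.digits b n).length)
        + m % b ^ ((Nat.digits b m).length - (Nat.digits b n).length) := by
  set l := (Nat.digits b m).length - (Nat.digits b n).length
  conv_lhs => rw [← Nat.div_add_mod m (b ^ l)]
  rw [h2, mul_comm]

/-! ### The key bijections -/

section
variable {b : ℕ} {A : Finset ℕ} {n : ℕ}

lemma key_bij_mem (hb : 1 < b) (hn : 0 < n) (hadm : Admissible b A n) (h0 : 0 ∈ A) :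
    (∑' (p : ℕ × ℕ), if Admissible b A p.2 ∧ p.2 < b ^ p.1
        then ((n * b ^ p.1 + p.2 : ℕ) : ℝ≥0∞)⁻¹ else 0)
      = ∑' (m : ℕ), if KLCond b A n m then ((m : ℕ) : ℝ≥0∞)⁻¹ else 0 := by
  have hbp : ∀ l : ℕ, 0 < b ^ l := fun l => Nat.pow_pos (by omega)
  have mem_supp : ∀ m : ℕ, (if KLCond b A n m then ((m : ℕ) : ℝ≥0∞)⁻¹ else 0) ≠ 0 →
      KLCond b A n m := by
    intro m h
    by_contra hc
    exact h (if_neg hc)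
  apply tsum_eq_tsum_of_ne_zero_bij
    (fun m => ((Nat.digits b (m : ℕ)).length - (Nat.digits b n).length,
        (m : ℕ) % b ^ ((Nat.digits b (m : ℕ)).length - (Nat.digits b n).length)))
  · rintro ⟨m, hm⟩ ⟨m', hm'⟩ h
    have hc : KLCond b A n m := mem_supp m hm
    have hc' : KLCond b A n m' := mem_supp m' hm'
    simp only [Prod.mk.injEq] at h
    have e1 := cond_decomp hb hc.2.2
    have e2 := cond_decomp hb hc'.2.2
    simp only [Subtype.mk.injEq]
    rw [h.2, h.1] at e1
    exact e1.trans e2.symm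
  · rintro ⟨l, k⟩ hp
    simp only [Function.mem_support] at hp
    have hcond : Admissible b A k ∧ k < b ^ l := by
      by_contra hc
      simp [if_neg hc] at hp
    obtain ⟨hak, hkl⟩ := hcond
    set m := n * b ^ l + k with hm
    have hlen : (Nat.digits b m).length = l + (Nat.digits b n).length :=
      len_decomp hb (by omega) hkl
    have hl : (Nat.digits b m).length - (Nat.digits b n).length = l := by omega
    have hcm : KLCond b A n m := by
      refine ⟨?_, by omega, ?_⟩
      · exact (adm_decomp hb hadm hn hkl).mpr ⟨hak.1, fun _ => h0⟩
      · rw [hl]; exact div_decomp hb hkl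
    refine ⟨⟨m, ?_⟩, ?_⟩
    · simp only [Function.mem_support]
      rw [if_pos hcm]
      simp [ENNReal.inv_ne_zero]
    · simp only [hl]
      rw [Prod.mk.injEq]
      refine ⟨rfl, ?_⟩
      rw [hm, mul_comm n (b ^ l), Nat.mul_add_mod, Nat.mod_eq_of_lt hkl]
  · rintro ⟨m, hm⟩
    have hc : KLCond b A n m := mem_supp m hm
    set l := (Nat.digits b m).length - (Nat.digits b n).length with hl
    set k := m % b ^ l with hk
    have hkl : k < b ^ l := Nat.mod_lt _ (hbp l)
    have hme : m = n * b ^ l + k := cond_decomp hb hc.2.2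
    have hak : Admissible b A k := by
      have := (adm_decomp hb hadm hn hkl).mp (hme ▸ hc.1)
      exact ⟨this.1, fun _ => h0⟩
    simp only
    rw [if_pos ⟨hak, hkl⟩, if_pos hc, ← hme]

lemma key_bij_not_mem (hb : 1 < b) (hn : 0 < n) (hadm : Admissible b A n) (h0 : 0 ∉ A) :
    ((n : ℝ≥0∞)⁻¹ + ∑' (p : ℕ × ℕ),
        if (Admissible b A p.2 ∧ p.1 ≤ (Nat.digits b p.2).length) ∧ p.2 < b ^ p.1
        then ((n * b ^ p.1 + p.2 : ℕ) : ℝ≥0∞)⁻¹ else 0)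
      = ∑' (m : ℕ), if KLCond b A n m then ((m : ℕ) : ℝ≥0∞)⁻¹ else 0 := by
  have hbp : ∀ l : ℕ, 0 < b ^ l := fun l => Nat.pow_pos (by omega)
  have hL : 0 < (Nat.digits b n).length := by
    rw [Nat.digits_len b n hb (by omega)]; omega
  rw [ENNReal.tsum_eq_add_tsum_ite n]
  have hcn : KLCond b A n n := ⟨hadm, le_refl _, by simp⟩
  rw [if_pos hcn]
  congr 1
  apply tsum_eq_tsum_of_ne_zero_bij
    (fun m => ((Nat.digits b (m : ℕ)).length - (Nat.digits b n).length,
        (m : ℕ) % b ^ ((Nat.digits b (m : ℕ)).length - (Nat.digits b n).length)))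
  · rintro ⟨m, hm⟩ ⟨m', hm'⟩ h
    have hc : KLCond b A n m := by
      by_contra hc
      exact hm (by by_cases h' : m = n <;> simp [h', hc])
    have hc' : KLCond b A n m' := by
      by_contra hc'
      exact hm' (by by_cases h' : m' = n <;> simp [h', hc'])
    simp only [Prod.mk.injEq] at h
    have e1 := cond_decomp hb hc.2.2
    have e2 := cond_decomp hb hc'.2.2
    simp only [Subtype.mk.injEq]
    rw [h.2, h.1] at e1
    exact e1.trans e2.symm
  · rintro ⟨l, k⟩ hp
    simp only [Function.mem_support] at hp
    have hcond : (Admissible b A k ∧ l ≤ (Nat.digits b k).length) ∧ k < b ^ l := by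
      by_contra hc
      simp [if_neg hc] at hp
    obtain ⟨⟨hak, hlk⟩, hkl⟩ := hcond
    have hlk' : (Nat.digits b k).length ≤ l := (digits_len_le_iff hb).mpr hkl
    have hlpos : 0 < l := by
      rcases Nat.eq_zero_or_pos l with rfl | h
      · exfalso
        have : k = 0 := by simpa using hkl
        exact h0 (hak.2 this)
      · exact h
    set m := n * b ^ l + k with hm
    have hlen : (Nat.digits b m).length = l + (Nat.digits b n).length :=
      len_decomp hb (by omega) hkl
    have hl : (Nat.digits b m).length - (Nat.digits b n).length = l := by omega
    have hcm : KLCond b A n m := by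
      refine ⟨?_, by omega, ?_⟩
      · exact (adm_decomp hb hadm hn hkl).mpr ⟨hak.1, fun hlt => by omega⟩
      · rw [hl]; exact div_decomp hb hkl
    have hmn : m ≠ n := by
      intro he
      have : (Nat.digits b m).length = (Nat.digits b n).length := by rw [he]
      omega
    refine ⟨⟨m, ?_⟩, ?_⟩
    · simp only [Function.mem_support]
      rw [if_neg hmn, if_pos hcm]
      simp [ENNReal.inv_ne_zero]
    · simp only [hl]
      rw [Prod.mk.injEq]
      refine ⟨rfl, ?_⟩
      rw [hm, mul_comm n (b ^ l), Nat.mul_add_mod, Nat.mod_eq_of_lt hkl]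
  · rintro ⟨m, hm⟩
    have hmn : m ≠ n := by
      intro he
      exact hm (by simp [he])
    have hc : KLCond b A n m := by
      by_contra hc
      exact hm (by by_cases h' : m = n <;> simp [h', hc])
    set l := (Nat.digits b m).length - (Nat.digits b n).length with hl
    set k := m % b ^ l with hk
    have hkl : k < b ^ l := Nat.mod_lt _ (hbp l)
    have hme : m = n * b ^ l + k := cond_decomp hb hc.2.2
    have hlpos : 0 < l := by
      rcases Nat.eq_zero_or_pos l with hz | h
      · exfalso
        apply hmn
        have := hc.2.2
        rw [← hl, hz, pow_zero, Nat.div_one] at this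
        exact this
      · exact h
    have hadk := (adm_decomp hb hadm hn hkl).mp (hme ▸ hc.1)
    have hlenk : l ≤ (Nat.digits b k).length := by
      by_contra hcon
      exact h0 (hadk.2 (by omega))
    have hknz : k ≠ 0 := by
      intro he
      rw [he] at hlenk
      simp at hlenk
      omega
    have hak : Admissible b A k := ⟨hadk.1, fun he => absurd he hknz⟩
    simp only
    rw [if_pos ⟨⟨hak, hlenk⟩, hkl⟩, if_neg hmn, if_pos hc, ← hme]

end

/-! ### lintegral computations -/

lemma mem_Ico_div_iff {b k l : ℕ} (hb : 1 < b) :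
    ((k : ℝ) / (b : ℝ) ^ l ∈ Set.Ico (0 : ℝ) 1) ↔ k < b ^ l := by
  have hB : (0 : ℝ) < (b : ℝ) ^ l := by positivity
  simp only [Set.mem_Ico]
  rw [div_lt_one hB]
  constructor
  · rintro ⟨-, h⟩
    exact_mod_cast (by push_cast at h ⊢; exact h : (k : ℝ) < ((b ^ l : ℕ) : ℝ))
  · intro h
    refine ⟨by positivity, ?_⟩
    push_cast
    exact_mod_cast h

lemma term_val {b n k l : ℕ} (hb : 1 < b) (hn : 0 < n) :
    (((b : ℝ≥0∞)) ^ l)⁻¹ * ENNReal.ofReal (1 / ((n : ℝ) + (k : ℝ) / (b : ℝ) ^ l))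
      = ((n * b ^ l + k : ℕ) : ℝ≥0∞)⁻¹ := by
  have hB : (0 : ℝ) < (b : ℝ) ^ l := by positivity
  have hm : (0 : ℝ) < ((n * b ^ l + k : ℕ) : ℝ) := by
    have : 0 < n * b ^ l := Nat.mul_pos hn (Nat.pow_pos (by omega))
    have : 0 < n * b ^ l + k := by omega
    exact_mod_cast this
  have h1 : ((b : ℝ≥0∞)) ^ l = ENNReal.ofReal ((b : ℝ) ^ l) := by
    rw [ENNReal.ofReal_pow (by positivity), ENNReal.ofReal_natCast]
  rw [h1, ← ENNReal.ofReal_inv_of_pos hB, ← ENNReal.ofReal_mul (by positivity)]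
  have h2 : ((n * b ^ l + k : ℕ) : ℝ≥0∞) = ENNReal.ofReal ((n * b ^ l + k : ℕ) : ℝ) :=
    (ENNReal.ofReal_natCast _).symm
  rw [h2, ← ENNReal.ofReal_inv_of_pos hm]
  congr 1
  have hd : (n : ℝ) + (k : ℝ) / (b : ℝ) ^ l ≠ 0 := by
    have : (0:ℝ) < (n : ℝ) + (k : ℝ) / (b : ℝ) ^ l := by positivity
    linarith
  push_cast
  field_simp

section
variable {b : ℕ} {A : Finset ℕ} {n : ℕ}

lemma lintegral_case_mem (hb : 1 < b) (hn : 0 < n) (h0 : 0 ∈ A) :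
    ∫⁻ x in Set.Ico (0 : ℝ) 1, ENNReal.ofReal (1 / ((n : ℝ) + x)) ∂(kempnerMeasure b A)
      = ∑' (p : ℕ × ℕ), if Admissible b A p.2 ∧ p.2 < b ^ p.1
          then ((n * b ^ p.1 + p.2 : ℕ) : ℝ≥0∞)⁻¹ else 0 := by
  classical
  rw [kempnerMeasure, if_pos h0]
  rw [Measure.restrict_sum _ measurableSet_Ico, lintegral_sum_measure]
  rw [ENNReal.tsum_prod']
  refine tsum_congr fun l => ?_
  rw [Measure.restrict_smul, lintegral_smul_measure,
    Measure.restrict_sum _ measurableSet_Ico, lintegral_sum_measure]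
  have step : ∀ k : {k : ℕ // Admissible b A k},
      ∫⁻ x in Set.Ico (0 : ℝ) 1, ENNReal.ofReal (1 / ((n : ℝ) + x))
          ∂(Measure.dirac (((k : ℕ) : ℝ) / (b : ℝ) ^ l))
        = if (((k : ℕ) : ℝ) / (b : ℝ) ^ l ∈ Set.Ico (0 : ℝ) 1)
            then ENNReal.ofReal (1 / ((n : ℝ) + ((k : ℕ) : ℝ) / (b : ℝ) ^ l)) else 0 :=
    fun k => setLIntegral_dirac _ _
  rw [tsum_congr step, smul_eq_mul, ← ENNReal.tsum_mul_left]
  refine Eq.trans (tsum_subtype {k : ℕ | Admissible b A k}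
    (fun k => ((b : ℝ≥0∞) ^ l)⁻¹ * if ((k : ℝ) / (b : ℝ) ^ l ∈ Set.Ico (0 : ℝ) 1)
        then ENNReal.ofReal (1 / ((n : ℝ) + (k : ℝ) / (b : ℝ) ^ l)) else 0)) ?_
  refine tsum_congr fun k => ?_
  rw [Set.indicator_apply]
  by_cases hak : Admissible b A k
  · rw [if_pos (by exact hak)]
    by_cases hkl : k < b ^ l
    · rw [if_pos ((mem_Ico_div_iff hb).mpr hkl), if_pos ⟨hak, hkl⟩, term_val hb hn]
    · rw [if_neg (fun h => hkl ((mem_Ico_div_iff hb).mp h)), mul_zero,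
        if_neg (fun h => hkl h.2)]
  · rw [if_neg (by exact hak), if_neg (fun h => hak h.1)]

lemma lintegral_case_not_mem (hb : 1 < b) (hn : 0 < n) (h0 : 0 ∉ A) :
    ∫⁻ x in Set.Ico (0 : ℝ) 1, ENNReal.ofReal (1 / ((n : ℝ) + x)) ∂(kempnerMeasure b A)
      = (n : ℝ≥0∞)⁻¹ + ∑' (p : ℕ × ℕ),
          if (Admissible b A p.2 ∧ p.1 ≤ (Nat.digits b p.2).length) ∧ p.2 < b ^ p.1
          then ((n * b ^ p.1 + p.2 : ℕ) : ℝ≥0∞)⁻¹ else 0 := by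
  classical
  rw [kempnerMeasure, if_neg h0]
  rw [Measure.restrict_add, lintegral_add_measure]
  congr 1
  · rw [setLIntegral_dirac]
    rw [if_pos (by constructor <;> norm_num : (0:ℝ) ∈ Set.Ico (0:ℝ) 1)]
    rw [add_zero, one_div, ENNReal.ofReal_inv_of_pos (by exact_mod_cast hn),
      ENNReal.ofReal_natCast]
  · rw [Measure.restrict_sum _ measurableSet_Ico, lintegral_sum_measure]
    rw [ENNReal.tsum_prod']
    refine tsum_congr fun l => ?_
    rw [Measure.restrict_smul, lintegral_smul_measure,
      Measure.restrict_sum _ measurableSet_Ico, lintegral_sum_measure]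
    have step : ∀ k : {k : ℕ // Admissible b A k ∧ l ≤ (Nat.digits b k).length},
        ∫⁻ x in Set.Ico (0 : ℝ) 1, ENNReal.ofReal (1 / ((n : ℝ) + x))
            ∂(Measure.dirac (((k : ℕ) : ℝ) / (b : ℝ) ^ l))
          = if (((k : ℕ) : ℝ) / (b : ℝ) ^ l ∈ Set.Ico (0 : ℝ) 1)
              then ENNReal.ofReal (1 / ((n : ℝ) + ((k : ℕ) : ℝ) / (b : ℝ) ^ l)) else 0 :=
      fun k => setLIntegral_dirac _ _
    rw [tsum_congr step, smul_eq_mul, ← ENNReal.tsum_mul_left]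
    refine Eq.trans (tsum_subtype {k : ℕ | Admissible b A k ∧ l ≤ (Nat.digits b k).length}
      (fun k => ((b : ℝ≥0∞) ^ l)⁻¹ * if ((k : ℝ) / (b : ℝ) ^ l ∈ Set.Ico (0 : ℝ) 1)
          then ENNReal.ofReal (1 / ((n : ℝ) + (k : ℝ) / (b : ℝ) ^ l)) else 0)) ?_
    refine tsum_congr fun k => ?_
    rw [Set.indicator_apply]
    by_cases hak : Admissible b A k ∧ l ≤ (Nat.digits b k).length
    · rw [if_pos (by exact hak)]
      by_cases hkl : k < b ^ l
      · rw [if_pos ((mem_Ico_div_iff hb).mpr hkl), if_pos ⟨hak, hkl⟩, term_val hb hn]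
      · rw [if_neg (fun h => hkl ((mem_Ico_div_iff hb).mp h)), mul_zero,
          if_neg (fun h => hkl h.2)]
    · rw [if_neg (by exact hak), if_neg (fun h => hak h.1)]

end

theorem kempner_leading_digits_integral (b : ℕ) (hb : 1 < b) (A : Finset ℕ)
    (hA : A ⊂ Finset.range b) (hAne : A.Nonempty) (hA0 : A ≠ {0})
    (n : ℕ) (hn : 0 < n) (hadm : Admissible b A n) :
    ∫ x in Set.Ico (0 : ℝ) 1, 1 / ((n : ℝ) + x) ∂(kempnerMeasure b A)
      = ∑' m : {m : ℕ // Admissible b A m ∧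
            (Nat.digits b n).length ≤ (Nat.digits b m).length ∧
            m / b ^ ((Nat.digits b m).length - (Nat.digits b n).length) = n},
          (1 : ℝ) / ((m : ℕ) : ℝ) := by
  classical
  have hL : 0 < (Nat.digits b n).length := by
    rw [Nat.digits_len b n hb (by omega)]; omega
  have hm0 : ∀ m : ℕ, KLCond b A n m → m ≠ 0 := by
    intro m hc he
    subst he
    have h2 := hc.2.1
    simp only [Nat.digits_zero, List.length_nil, Nat.le_zero] at h2
    omega
  have hnonneg : 0 ≤ᵐ[(kempnerMeasure b A).restrict (Set.Ico (0 : ℝ) 1)]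
      fun x => 1 / ((n : ℝ) + x) := by
    refine (ae_restrict_iff' measurableSet_Ico).mpr (Filter.Eventually.of_forall fun x hx => ?_)
    have h1 : (1 : ℝ) ≤ (n : ℝ) := by exact_mod_cast hn
    have hpos : (0 : ℝ) < (n : ℝ) + x := by
      have := hx.1
      linarith
    positivity
  have hmeas : AEStronglyMeasurable (fun x => 1 / ((n : ℝ) + x))
      ((kempnerMeasure b A).restrict (Set.Ico (0 : ℝ) 1)) := by
    apply Measurable.aestronglyMeasurable
    simp only [one_div]
    exact (measurable_const.add measurable_id).inv
  rw [integral_eq_lintegral_of_nonneg_ae hnonneg hmeas]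
  have hrhs : (∑' (m : ℕ), if KLCond b A n m then ((m : ℕ) : ℝ≥0∞)⁻¹ else 0).toReal
      = ∑' m : {m : ℕ // Admissible b A m ∧
            (Nat.digits b n).length ≤ (Nat.digits b m).length ∧
            m / b ^ ((Nat.digits b m).length - (Nat.digits b n).length) = n},
          (1 : ℝ) / ((m : ℕ) : ℝ) := by
    have hne : ∀ m : ℕ, (if KLCond b A n m then ((m : ℕ) : ℝ≥0∞)⁻¹ else 0) ≠ ⊤ := by
      intro m
      by_cases hc : KLCond b A n m
      · rw [if_pos hc]
        exact ENNReal.inv_ne_top.mpr (Nat.cast_ne_zero.mpr (hm0 m hc))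
      · rw [if_neg hc]
        exact ENNReal.zero_ne_top
    rw [ENNReal.tsum_toReal_eq hne]
    refine Eq.trans (tsum_congr fun m => ?_)
      (tsum_subtype {m : ℕ | Admissible b A m ∧
        (Nat.digits b n).length ≤ (Nat.digits b m).length ∧
        m / b ^ ((Nat.digits b m).length - (Nat.digits b n).length) = n}
        (fun m => (1 : ℝ) / (m : ℝ))).symm
    rw [Set.indicator_apply]
    by_cases hc : KLCond b A n m
    · rw [if_pos hc, if_pos (show m ∈ _ from hc)]
      rw [ENNReal.toReal_inv]
      simp [one_div]
    · rw [if_neg hc, if_neg (show m ∉ _ from hc)]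
      simp
  by_cases h0 : 0 ∈ A
  · rw [lintegral_case_mem hb hn h0, key_bij_mem hb hn hadm h0, hrhs]
  · rw [lintegral_case_not_mem hb hn h0, key_bij_not_mem hb hn hadm h0, hrhs]
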